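/- Let σ_B be a linear order on B and suppose G (with no isolated vertices) admits an AB-Stick order, i.e. a Stick order whose restriction to A is the given order a_1 < … < a_n and whose restriction to B is σ_B. Then there exists an AB-Stick order ≺* such that for every AB-Stick order ≺ and every b ∈ B, the number of elements of A preceding b in ≺* is at most the number of elements of A preceding b in ≺; moreover, length(≺*) ≤ length(≺) for every AB-Stick order ≺. -/

import Mathlib

open Sum

/-- A Stick order for `G = (A ∪ B, E)`: a linear (strict total) order on `A ∪ B` such that
every `A`-endpoint of an edge precedes its `B`-endpoint, and there is no forbidden
configuration `a' ≺ a ≺ b ≺ b'` with `a'b ∈ E`, `ab' ∈ E`, `ab ∉ E`. -/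
def IsStickOrder (n : ℕ) (β : Type) (E : Fin n → β → Prop)
    (r : (Fin n ⊕ β) → (Fin n ⊕ β) → Prop) : Prop :=
  IsStrictTotalOrder (Fin n ⊕ β) r ∧
  (∀ (a : Fin n) (b : β), E a b → r (inl a) (inr b)) ∧
  ¬ ∃ (a a' : Fin n) (b b' : β),
      r (inl a') (inl a) ∧ r (inl a) (inr b) ∧ r (inr b) (inr b') ∧
      E a' b ∧ E a b' ∧ ¬ E a b

/-- An A-Stick order: a Stick order whose restriction to `A` is the given order. -/
def IsAStickOrder (n : ℕ) (β : Type) (E : Fin n → β → Prop)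
    (r : (Fin n ⊕ β) → (Fin n ⊕ β) → Prop) : Prop :=
  IsStickOrder n β E r ∧ ∀ i j : Fin n, r (inl i) (inl j) ↔ i < j
/-- The rank of a vertex in an order `r`: the number of vertices strictly preceding it
(positions in the steady representation). -/
noncomputable def rankOf (n : ℕ) (β : Type) (r : (Fin n ⊕ β) → (Fin n ⊕ β) → Prop)
    (v : Fin n ⊕ β) : ℕ :=
  Set.ncard {w : Fin n ⊕ β | r w v}

open Classical in
/-- The total segment length of the steady Stick representation with origin order `r`, all
segments as short as possible: the segment of `b ∈ B` has length `rank b - rank a_{1_b}`,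
and the segment of `a ∈ A` has length `rank b* - rank a` where `b*` is the `r`-largest
neighbor of `a` (its rank is the sup of the ranks of the neighbors of `a`). -/
noncomputable def lengthOf (n : ℕ) (β : Type) [Fintype β] (E : Fin n → β → Prop)
    (one : β → Fin n) (r : (Fin n ⊕ β) → (Fin n ⊕ β) → Prop) : ℕ :=
  (∑ b : β, (rankOf n β r (inr b) - rankOf n β r (inl (one b)))) +
  ∑ a : Fin n,
    ((Finset.univ.filter (fun b : β => E a b)).sup (fun b => rankOf n β r (inr b))
      - rankOf n β r (inl a))

/-- An AB-Stick order: a Stick order whose restriction to `A` is the given order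
`a_1 < … < a_n` and whose restriction to `B` is `σ_B`. -/
def IsABStickOrder (n : ℕ) (β : Type) (E : Fin n → β → Prop) (sB : β → β → Prop)
    (r : (Fin n ⊕ β) → (Fin n ⊕ β) → Prop) : Prop :=
  IsStickOrder n β E r ∧ (∀ i j : Fin n, r (inl i) (inl j) ↔ i < j) ∧
    ∀ p q : β, r (inr p) (inr q) ↔ sB p q

section Aux

open Classical in
/-- `k_c + 1`: one more than the largest index of a neighbor of `c`. -/
noncomputable def Kfun (n : ℕ) (β : Type) [Fintype β] (E : Fin n → β → Prop) (c : β) : ℕ :=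
  (Finset.univ.filter fun j : Fin n => E j c).sup fun j => (j : ℕ) + 1

open Classical in
/-- Minimal feasible threshold for `b`. -/
noncomputable def tfun (n : ℕ) (β : Type) [Fintype β] (E : Fin n → β → Prop)
    (sB : β → β → Prop) (b : β) : ℕ :=
  (Finset.univ.filter fun c : β => sB c b ∨ c = b).sup (Kfun n β E)

/-- The candidate optimal order. -/
def rstarRel (n : ℕ) (β : Type) [Fintype β] (E : Fin n → β → Prop)
    (sB : β → β → Prop) : (Fin n ⊕ β) → (Fin n ⊕ β) → Prop
  | inl i, inl j => i < j
  | inl i, inr b => (i : ℕ) < tfun n β E sB b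
  | inr b, inl i => tfun n β E sB b ≤ (i : ℕ)
  | inr b, inr c => sB b c

variable {n : ℕ} {β : Type} [Fintype β] {E : Fin n → β → Prop} {sB : β → β → Prop}

lemma edge_lt_tfun (i : Fin n) (b : β) (h : E i b) : (i : ℕ) < tfun n β E sB b := by
  classical
  have h1 : (i : ℕ) + 1 ≤ Kfun n β E b := by
    rw [Kfun]
    exact Finset.le_sup (f := fun j : Fin n => (j : ℕ) + 1) (by simp [h])
  have h2 : Kfun n β E b ≤ tfun n β E sB b := by
    rw [tfun]
    exact Finset.le_sup (f := Kfun n β E) (by simp)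
  omega

lemma tfun_mono (hsB : IsStrictTotalOrder β sB) {b c : β} (h : sB b c) :
    tfun n β E sB b ≤ tfun n β E sB c := by
  classical
  apply Finset.sup_mono
  intro d hd
  simp only [Finset.mem_filter, Finset.mem_univ, true_and] at hd ⊢
  rcases hd with hd | rfl
  · exact Or.inl (hsB.toIsTrans.trans _ _ _ hd h)
  · exact Or.inl h

/-- Key transfer lemma: in any AB-Stick order `r`, any `a_i` with `i < t*(b)` precedes `b`. -/
lemma transfer {r : (Fin n ⊕ β) → (Fin n ⊕ β) → Prop}
    (hr : IsABStickOrder n β E sB r) (i : Fin n) (b : β)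
    (h : (i : ℕ) < tfun n β E sB b) : r (inl i) (inr b) := by
  classical
  obtain ⟨⟨hsto, hedge, _⟩, hA, hB⟩ := hr
  have htr := hsto.toIsTrans.trans
  rw [tfun, Finset.lt_sup_iff] at h
  obtain ⟨c, hc, hic⟩ := h
  simp only [Finset.mem_filter, Finset.mem_univ, true_and] at hc
  rw [Kfun, Finset.lt_sup_iff] at hic
  obtain ⟨j, hj, hij⟩ := hic
  simp only [Finset.mem_filter, Finset.mem_univ, true_and] at hj
  have hjc : r (inl j) (inr c) := hedge j c hj
  have hic' : r (inl i) (inr c) := by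
    rcases eq_or_lt_of_le (Nat.lt_succ_iff.mp hij) with he | hlt
    · have : i = j := Fin.ext he
      exact this ▸ hjc
    · exact htr _ _ _ ((hA i j).mpr hlt) hjc
  rcases hc with hc | rfl
  · exact htr _ _ _ hic' ((hB c b).mpr hc)
  · exact hic'

/-- Splitting ranks in a strict total order on a finite type. -/
lemma rank_split {r : (Fin n ⊕ β) → (Fin n ⊕ β) → Prop}
    (hsto : IsStrictTotalOrder (Fin n ⊕ β) r) {v u : Fin n ⊕ β} (h : r v u) :
    rankOf n β r u = rankOf n β r v + 1 + Set.ncard {w | r v w ∧ r w u} := by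
  have htr := hsto.toIsTrans.trans
  have hirr := hsto.toIsStrictOrder.toIrrefl.irrefl
  have htri := @trichotomous _ r hsto.toTrichotomous
  have hset : {w | r w u} = {w | r w v} ∪ ({v} ∪ {w | r v w ∧ r w u}) := by
    ext w
    simp only [Set.mem_setOf_eq, Set.mem_union, Set.mem_singleton_iff]
    constructor
    · intro hw
      rcases htri w v with h1 | rfl | h1
      · exact Or.inl h1
      · exact Or.inr (Or.inl rfl)
      · exact Or.inr (Or.inr ⟨h1, hw⟩)
    · rintro (h1 | rfl | ⟨_, h2⟩)
      · exact htr _ _ _ h1 h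
      · exact h
      · exact h2
  have hd1 : Disjoint {w | r w v} ({v} ∪ {w | r v w ∧ r w u}) := by
    rw [Set.disjoint_left]
    intro w hw hmem
    rcases hmem with hmem | hmem
    · rw [Set.mem_singleton_iff] at hmem
      subst hmem
      exact hirr w hw
    · exact hirr w (htr w v w hw hmem.1)
  have hd2 : Disjoint ({v} : Set (Fin n ⊕ β)) {w | r v w ∧ r w u} := by
    rw [Set.disjoint_left]
    intro w hw hmem
    rw [Set.mem_singleton_iff] at hw
    subst hw
    exact hirr w hmem.1
  rw [rankOf, hset, Set.ncard_union_eq hd1 (Set.toFinite _) (Set.toFinite _),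
    Set.ncard_union_eq hd2 (Set.toFinite _) (Set.toFinite _), Set.ncard_singleton]
  rw [rankOf]
  ring

end Aux

/-- If `G` (with no isolated vertices) admits an AB-Stick order, then there
is an AB-Stick order `≺*` in which every `b ∈ B` is preceded by at most as many elements of
`A` as in any AB-Stick order `≺`; moreover `length(≺*) ≤ length(≺)` for every AB-Stick
order `≺`. -/
theorem stmt17 (n : ℕ) (β : Type) [Fintype β] (E : Fin n → β → Prop)
    (one : β → Fin n)
    (hone : ∀ j : β, E (one j) j ∧ ∀ i : Fin n, E i j → one j ≤ i)
    (hnoiso : ∀ a : Fin n, ∃ b : β, E a b)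
    (sB : β → β → Prop) (hsB : IsStrictTotalOrder β sB)
    (hex : ∃ r, IsABStickOrder n β E sB r) :
    ∃ rstar, IsABStickOrder n β E sB rstar ∧
      ∀ r, IsABStickOrder n β E sB r →
        (∀ b : β, Set.ncard {a : Fin n | rstar (inl a) (inr b)} ≤
          Set.ncard {a : Fin n | r (inl a) (inr b)}) ∧
        lengthOf n β E one rstar ≤ lengthOf n β E one r := by
  classical
  obtain ⟨r0, hr0⟩ := hex
  set R := rstarRel n β E sB with hR
  -- R is a strict total order
  have htri : ∀ x y : Fin n ⊕ β, R x y ∨ x = y ∨ R y x := by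
    rintro (i | b) (j | c)
    · rcases lt_trichotomy i j with h | h | h
      · exact Or.inl h
      · exact Or.inr (Or.inl (by rw [h]))
      · exact Or.inr (Or.inr h)
    · rcases lt_or_ge (i : ℕ) (tfun n β E sB c) with h | h
      · exact Or.inl h
      · exact Or.inr (Or.inr h)
    · rcases le_or_gt (tfun n β E sB b) (j : ℕ) with h | h
      · exact Or.inl h
      · exact Or.inr (Or.inr h)
    · rcases @trichotomous _ sB hsB.toTrichotomous b c with h | h | h
      · exact Or.inl h
      · exact Or.inr (Or.inl (by rw [h]))
      · exact Or.inr (Or.inr h)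
  have hirr : ∀ x : Fin n ⊕ β, ¬ R x x := by
    rintro (i | b)
    · exact lt_irrefl i
    · exact hsB.irrefl b
  have htrans : ∀ x y z : Fin n ⊕ β, R x y → R y z → R x z := by
    rintro (i | b) (j | c) (k | d) h1 h2
    · exact lt_trans h1 h2
    · show (i : ℕ) < tfun n β E sB d
      exact lt_of_le_of_lt (Nat.le_of_lt h1) h2
    · show i < k
      exact Fin.lt_def.mpr (lt_of_lt_of_le h1 h2)
    · show (i : ℕ) < tfun n β E sB d
      exact lt_of_lt_of_le h1 (tfun_mono hsB h2)
    · show tfun n β E sB b ≤ (k : ℕ)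
      exact Nat.le_trans h1 (Nat.le_of_lt h2)
    · -- R (inr b) (inl j), R (inl j) (inr d): need sB b d
      show sB b d
      rcases @trichotomous _ sB hsB.toTrichotomous b d with h | rfl | h
      · exact h
      · exact absurd (lt_of_le_of_lt h1 h2) (lt_irrefl _)
      · exact absurd (lt_of_le_of_lt (le_trans (tfun_mono hsB h) h1) h2) (lt_irrefl _)
    · show tfun n β E sB b ≤ (k : ℕ)
      exact le_trans (tfun_mono hsB h1) h2
    · exact hsB.trans _ _ _ h1 h2
  have hsto : IsStrictTotalOrder (Fin n ⊕ β) R :=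
    { trichotomous := fun a b h1 h2 => (htri a b).elim (fun h => absurd h h1)
        (fun h => h.elim id (fun h => absurd h h2)), irrefl := fun a => hirr a, trans := htrans }
  -- R satisfies the edge condition
  have hedgeR : ∀ (a : Fin n) (b : β), E a b → R (inl a) (inr b) := fun a b h =>
    edge_lt_tfun a b h
  -- R has no forbidden configuration
  have hforb : ¬ ∃ (a a' : Fin n) (b b' : β),
      R (inl a') (inl a) ∧ R (inl a) (inr b) ∧ R (inr b) (inr b') ∧
      E a' b ∧ E a b' ∧ ¬ E a b := by
    rintro ⟨a, a', b, b', h1, h2, h3, e1, e2, e3⟩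
    exact hr0.1.2.2 ⟨a, a', b, b',
      (hr0.2.1 a' a).mpr h1, transfer hr0 a b h2, (hr0.2.2 b b').mpr h3, e1, e2, e3⟩
  have hstar : IsABStickOrder n β E sB R :=
    ⟨⟨hsto, hedgeR, hforb⟩, fun _ _ => Iff.rfl, fun _ _ => Iff.rfl⟩
  refine ⟨R, hstar, ?_⟩
  intro r hr
  -- transfer lemmas
  have H2 : ∀ (i : Fin n) (w : Fin n ⊕ β), R (inl i) w → r (inl i) w := by
    rintro i (j | c) h
    · exact (hr.2.1 i j).mpr h
    · exact transfer hr i c h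
  have H1 : ∀ (w : Fin n ⊕ β) (b : β), R w (inr b) → r w (inr b) := by
    rintro (j | c) b h
    · exact transfer hr j b h
    · exact (hr.2.2 c b).mpr h
  constructor
  · intro b
    apply Set.ncard_le_ncard _ (Set.toFinite _)
    intro a ha
    exact transfer hr a b ha
  · -- length comparison
    have key : ∀ (i : Fin n) (b : β), R (inl i) (inr b) →
        rankOf n β R (inr b) - rankOf n β R (inl i) ≤
          rankOf n β r (inr b) - rankOf n β r (inl i) := by
      intro i b hib
      have hib' : r (inl i) (inr b) := transfer hr i b hib
      rw [rank_split hsto hib, rank_split hr.1.1 hib']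
      have hsub : {w | R (inl i) w ∧ R w (inr b)} ⊆
          {w | r (inl i) w ∧ r w (inr b)} := by
        rintro w ⟨h1, h2⟩
        exact ⟨H2 i w h1, H1 w b h2⟩
      have := Set.ncard_le_ncard hsub (Set.toFinite _)
      omega
    rw [lengthOf, lengthOf]
    apply Nat.add_le_add
    · apply Finset.sum_le_sum
      intro b _
      exact key (one b) b (hedgeR (one b) b (hone b).1)
    · apply Finset.sum_le_sum
      intro a _
      obtain ⟨b, hb⟩ := hnoiso a
      have hne : (Finset.univ.filter (fun b : β => E a b)).Nonempty :=
        ⟨b, by simp [hb]⟩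
      obtain ⟨b0, hb0mem, hb0⟩ := Finset.exists_mem_eq_sup _ hne
        (fun b => rankOf n β R (inr b))
      rw [hb0]
      have hab0 : E a b0 := by simpa using hb0mem
      calc rankOf n β R (inr b0) - rankOf n β R (inl a)
          ≤ rankOf n β r (inr b0) - rankOf n β r (inl a) :=
            key a b0 (hedgeR a b0 hab0)
        _ ≤ (Finset.univ.filter (fun b : β => E a b)).sup
              (fun b => rankOf n β r (inr b)) - rankOf n β r (inl a) :=
            Nat.sub_le_sub_right
              (Finset.le_sup (f := fun b => rankOf n β r (inr b)) hb0mem) _
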